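/- Suppose D and Z are {0,1}-valued random variables, the family of all potential variables (M_{d,z})_{d,z∈{0,1}} and (Y_{d,m})_{d,m∈{0,1}} is independent of the pair (D,Z), P(D=0, Z=z) > 0 for z = 0,1, the observed mediator is M = M_{D,Z} and the observed outcome is Y = Y_{D,M}. Then E[M | D=0, Z=1] − E[M | D=0, Z=0] = E[M_{0,1} − M_{0,0}] and E[Y | D=0, Z=1] − E[Y | D=0, Z=0] = E[Y_{0,M_{0,1}} − Y_{0,M_{0,0}}]; consequently, if E[M_{0,1} − M_{0,0}] ≠ 0, the Wald ratio (E[Y|D=0,Z=1] − E[Y|D=0,Z=0]) / (E[M|D=0,Z=1] − E[M|D=0,Z=0]) equals E[Y_{0,M_{0,1}} − Y_{0,M_{0,0}}] / E[M_{0,1} − M_{0,0}]. -/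

import Mathlib

open MeasureTheory ProbabilityTheory

/-- Conditional mean `E[W | A] = E[W·1_A] / P(A)` (set integral divided by probability). -/
noncomputable def condMean {Ω : Type*} [MeasurableSpace Ω] (P : Measure Ω)
    (W : Ω → ℝ) (A : Set Ω) : ℝ :=
  (∫ ω in A, W ω ∂P) / (P A).toReal

/-- A `{0,1}`-valued (Bool-coded) random variable, viewed as a real number. -/
noncomputable def bR (b : Bool) : ℝ := if b then 1 else 0

/-- The σ-algebra generated by all the potential variables. -/
def potSig {Ω : Type*} (M : Bool → Bool → Ω → Bool) (Ypo : Bool → Bool → Ω → ℝ) :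
    MeasurableSpace Ω :=
  ((⨆ (d : Bool) (z : Bool), MeasurableSpace.comap (M d z) inferInstance)
    ⊔ (⨆ (d : Bool) (m : Bool), MeasurableSpace.comap (Ypo d m) inferInstance))

/-- If `f` is measurable w.r.t. a σ-algebra `G` independent of `H`, and `A ∈ H`
is also ambiently measurable, then `∫_A f = (∫ f) * P(A)`. -/
lemma key_setIntegral {Ω : Type*} {G H : MeasurableSpace Ω} [mΩ : MeasurableSpace Ω]
    (P : Measure Ω) [IsProbabilityMeasure P] (hIndep : Indep G H P)
    {f : Ω → ℝ} (hfG : Measurable[G] f) (hfInt : Integrable f P)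
    {A : Set Ω} (hAH : MeasurableSet[H] A) (hA : MeasurableSet A) :
    ∫ ω in A, f ω ∂P = (∫ ω, f ω ∂P) * (P A).toReal := by
  set g : Ω → ℝ := A.indicator (fun _ => (1 : ℝ)) with hg
  have hgH : Measurable[H] g := measurable_const.indicator hAH
  have hfg : IndepFun f g P := by
    rw [IndepFun_iff]
    intro t1 t2 ht1 ht2
    have h1 : MeasurableSet[G] t1 := (measurable_iff_comap_le.mp hfG) t1 ht1
    have h2 : MeasurableSet[H] t2 := (measurable_iff_comap_le.mp hgH) t2 ht2
    exact ((Indep_iff _ _ _).mp hIndep) t1 t2 h1 h2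
  have hgInt : Integrable g P := (integrable_const (1 : ℝ)).indicator hA
  have hmul := IndepFun.integral_mul_eq_mul_integral hfg hfInt.aestronglyMeasurable hgInt.aestronglyMeasurable
  have h1 : (f * g) = A.indicator f := by
    funext ω
    by_cases hω : ω ∈ A
    · simp [hg, Set.indicator_of_mem hω]
    · simp [hg, Set.indicator_of_notMem hω]
  rw [h1, integral_indicator hA] at hmul
  have h3 : ∫ ω, g ω ∂P = (P A).toReal := by
    rw [hg, integral_indicator hA]
    simp [Measure.real]
  rw [hmul, h3]

theorem stmt_3 {Ω : Type*} [MeasurableSpace Ω] (P : Measure Ω) [IsProbabilityMeasure P]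
    (D Z : Ω → Bool) (M : Bool → Bool → Ω → Bool) (Ypo : Bool → Bool → Ω → ℝ)
    (hD : Measurable D) (hZ : Measurable Z) (hM : ∀ d z, Measurable (M d z))
    (hYint : ∀ d m, Integrable (Ypo d m) P)
    (hIndep : Indep
      ((⨆ (d : Bool) (z : Bool), MeasurableSpace.comap (M d z) inferInstance)
        ⊔ (⨆ (d : Bool) (m : Bool), MeasurableSpace.comap (Ypo d m) inferInstance))
      (MeasurableSpace.comap (fun ω => (D ω, Z ω)) inferInstance) P)
    (hpos : ∀ z : Bool, 0 < (P {ω | D ω = false ∧ Z ω = z}).toReal) :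
    (condMean P (fun ω => bR (M (D ω) (Z ω) ω)) {ω | D ω = false ∧ Z ω = true}
        - condMean P (fun ω => bR (M (D ω) (Z ω) ω)) {ω | D ω = false ∧ Z ω = false}
      = ∫ ω, (bR (M false true ω) - bR (M false false ω)) ∂P)
    ∧ (condMean P (fun ω => Ypo (D ω) (M (D ω) (Z ω) ω) ω) {ω | D ω = false ∧ Z ω = true}
        - condMean P (fun ω => Ypo (D ω) (M (D ω) (Z ω) ω) ω) {ω | D ω = false ∧ Z ω = false}
      = ∫ ω, (Ypo false (M false true ω) ω - Ypo false (M false false ω) ω) ∂P)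
    ∧ ((∫ ω, (bR (M false true ω) - bR (M false false ω)) ∂P) ≠ 0 →
      (condMean P (fun ω => Ypo (D ω) (M (D ω) (Z ω) ω) ω) {ω | D ω = false ∧ Z ω = true}
          - condMean P (fun ω => Ypo (D ω) (M (D ω) (Z ω) ω) ω) {ω | D ω = false ∧ Z ω = false})
        / (condMean P (fun ω => bR (M (D ω) (Z ω) ω)) {ω | D ω = false ∧ Z ω = true}
          - condMean P (fun ω => bR (M (D ω) (Z ω) ω)) {ω | D ω = false ∧ Z ω = false})
      = (∫ ω, (Ypo false (M false true ω) ω - Ypo false (M false false ω) ω) ∂P)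
        / (∫ ω, (bR (M false true ω) - bR (M false false ω)) ∂P)) := by
  have hIndep' : Indep (potSig M Ypo)
      (MeasurableSpace.comap (fun ω => (D ω, Z ω)) inferInstance) P := hIndep
  -- measurability of potential variables w.r.t. potSig
  have hMG : ∀ d z, Measurable[potSig M Ypo] (M d z) := by
    intro d z
    refine measurable_iff_comap_le.mpr ?_
    exact le_trans (le_iSup₂ (f := fun d z => MeasurableSpace.comap (M d z) inferInstance) d z)
      le_sup_left
  have hYG : ∀ d m, Measurable[potSig M Ypo] (Ypo d m) := by
    intro d m
    refine measurable_iff_comap_le.mpr ?_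
    exact le_trans (le_iSup₂ (f := fun d m => MeasurableSpace.comap (Ypo d m) inferInstance) d m)
      le_sup_right
  -- the conditioning sets
  set A : Bool → Set Ω := fun z => {ω | D ω = false ∧ Z ω = z} with hA
  have hAH : ∀ z,
      MeasurableSet[MeasurableSpace.comap (fun ω => (D ω, Z ω)) inferInstance] (A z) := by
    intro z
    refine ⟨{(false, z)}, MeasurableSet.singleton _, ?_⟩
    ext ω
    simp [hA, Prod.ext_iff]
  have hAmeas : ∀ z, MeasurableSet (A z) :=
    fun z => (hD (MeasurableSet.singleton false)).inter (hZ (MeasurableSet.singleton z))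
  -- the counterfactual functions
  set fM : Bool → Ω → ℝ := fun z ω => bR (M false z ω) with hfM
  set fY : Bool → Ω → ℝ := fun z ω => Ypo false (M false z ω) ω with hfY
  have hfMG : ∀ z, Measurable[potSig M Ypo] (fM z) :=
    fun z => (measurable_from_top (f := bR)).comp (hMG false z)
  have hsG : ∀ z, MeasurableSet[potSig M Ypo] {ω | M false z ω = true} :=
    fun z => (hMG false z) (MeasurableSet.singleton true)
  have hs : ∀ z, MeasurableSet {ω | M false z ω = true} :=
    fun z => (hM false z) (MeasurableSet.singleton true)
  have hfYeq : ∀ z, fY z = fun ω =>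
      if M false z ω = true then Ypo false true ω else Ypo false false ω := by
    intro z; funext ω
    cases h : M false z ω <;> simp [hfY, h]
  have hfYG : ∀ z, Measurable[potSig M Ypo] (fY z) := by
    intro z
    rw [hfYeq z]
    exact Measurable.ite (hsG z) (hYG false true) (hYG false false)
  have hfMInt : ∀ z, Integrable (fM z) P := by
    intro z
    have h : fM z = ({ω | M false z ω = true}).indicator (fun _ => (1 : ℝ)) := by
      funext ω
      cases h : M false z ω <;>
        simp [hfM, bR, h, Set.indicator_apply]
    rw [h]
    exact (integrable_const (1 : ℝ)).indicator (hs z)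
  have hfYInt : ∀ z, Integrable (fY z) P := by
    intro z
    have h : fY z = ({ω | M false z ω = true}).indicator (Ypo false true)
        + ({ω | M false z ω = true})ᶜ.indicator (Ypo false false) := by
      funext ω
      by_cases h : M false z ω = true
      · simp [hfY, h, Set.indicator_apply]
      · simp [hfY, Bool.not_eq_true] at h ⊢
        simp [hfY, h, Set.indicator_apply]
    rw [h]
    exact ((hYint false true).indicator (hs z)).add
      ((hYint false false).indicator (hs z).compl)
  -- observed = counterfactual on A z
  have hobsM : ∀ z, ∫ ω in A z, bR (M (D ω) (Z ω) ω) ∂P = ∫ ω in A z, fM z ω ∂P := by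
    intro z
    refine setIntegral_congr_fun (hAmeas z) (fun ω hω => ?_)
    obtain ⟨h1, h2⟩ := hω
    simp [hfM, h1, h2]
  have hobsY : ∀ z, ∫ ω in A z, Ypo (D ω) (M (D ω) (Z ω) ω) ω ∂P
      = ∫ ω in A z, fY z ω ∂P := by
    intro z
    refine setIntegral_congr_fun (hAmeas z) (fun ω hω => ?_)
    obtain ⟨h1, h2⟩ := hω
    simp [hfY, h1, h2]
  -- condMean identities
  have hcondM : ∀ z, condMean P (fun ω => bR (M (D ω) (Z ω) ω)) (A z) = ∫ ω, fM z ω ∂P := by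
    intro z
    rw [condMean, hobsM z,
      key_setIntegral P hIndep' (hfMG z) (hfMInt z) (hAH z) (hAmeas z)]
    exact mul_div_cancel_right₀ _ (hpos z).ne'
  have hcondY : ∀ z,
      condMean P (fun ω => Ypo (D ω) (M (D ω) (Z ω) ω) ω) (A z) = ∫ ω, fY z ω ∂P := by
    intro z
    rw [condMean, hobsY z,
      key_setIntegral P hIndep' (hfYG z) (hfYInt z) (hAH z) (hAmeas z)]
    exact mul_div_cancel_right₀ _ (hpos z).ne'
  have part1 : condMean P (fun ω => bR (M (D ω) (Z ω) ω)) (A true)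
      - condMean P (fun ω => bR (M (D ω) (Z ω) ω)) (A false)
      = ∫ ω, (bR (M false true ω) - bR (M false false ω)) ∂P := by
    rw [hcondM true, hcondM false, ← integral_sub (hfMInt true) (hfMInt false)]
  have part2 : condMean P (fun ω => Ypo (D ω) (M (D ω) (Z ω) ω) ω) (A true)
      - condMean P (fun ω => Ypo (D ω) (M (D ω) (Z ω) ω) ω) (A false)
      = ∫ ω, (Ypo false (M false true ω) ω - Ypo false (M false false ω) ω) ∂P := by
    rw [hcondY true, hcondY false, ← integral_sub (hfYInt true) (hfYInt false)]
  exact ⟨part1, part2, fun _ => by rw [part1, part2]⟩
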